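/- Let ψ : Z → Z be an F-linear derivation of Z such that ψ(a)D(b) = D(a)ψ(b) for all a, b ∈ Z. Then there exists z ∈ Z such that D(z) is invertible in Z, and there exists c ∈ Z such that ψ(a) = c·D(a) for all a ∈ Z. -/

import Mathlib

/-- Let `F` be a field of characteristic 3 and `Z` a commutative associative unital
`F`-algebra with a nonzero `F`-linear derivation `D` such that the only `D`-invariant
ideals of `Z` are `0` and `Z`, and `D a = 0` only for `a ∈ F·1`.  If `ψ : Z → Z` is an
`F`-linear derivation with `ψ(a)D(b) = D(a)ψ(b)` for all `a, b`, then there exists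
`z ∈ Z` with `D z` invertible, and `ψ = c·D` for some `c ∈ Z`. -/
theorem psi_is_multiple_of_D
    {F : Type*} [Field F] [CharP F 3]
    {Z : Type*} [CommRing Z] [Algebra F Z]
    (D : Z →ₗ[F] Z)
    (hD : ∀ a b : Z, D (a * b) = D a * b + a * D b)
    (hD0 : D ≠ 0)
    (hsimple : ∀ I : Ideal Z, (∀ x ∈ I, D x ∈ I) → I = ⊥ ∨ I = ⊤)
    (hker : ∀ a : Z, D a = 0 → ∃ c : F, a = algebraMap F Z c)
    (ψ : Z →ₗ[F] Z)
    (hψ : ∀ a b : Z, ψ (a * b) = ψ a * b + a * ψ b)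
    (hcomm : ∀ a b : Z, ψ a * D b = D a * ψ b) :
    (∃ z : Z, IsUnit (D z)) ∧ (∃ c : Z, ∀ a : Z, ψ a = c * D a) := by
  have hZnt : Nontrivial Z := by
    rcases subsingleton_or_nontrivial Z with h | h
    · exact absurd (LinearMap.ext fun x => Subsingleton.elim _ _) hD0
    · exact h
  have h3Z : (3 : Z) = 0 := by
    have h := CharP.cast_eq_zero F 3
    have h2 := congrArg (algebraMap F Z) h
    rw [map_natCast, map_zero] at h2
    exact_mod_cast h2
  -- cube of anything has zero derivative
  have hcube : ∀ a : Z, D (a * (a * a)) = 0 := by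
    intro a
    have e1 := hD a (a * a)
    have e2 := hD a a
    linear_combination e1 + a * e2 + (a * a * D a) * h3Z
  -- main claim: some D z is a unit
  have hmain : ∃ z : Z, IsUnit (D z) := by
    by_contra hno
    push_neg at hno
    -- each D z is nilpotent
    have hnil : ∀ z : Z, D z ∈ nilradical Z := by
      intro z
      obtain ⟨c, hc⟩ := hker _ (hcube (D z))
      rcases eq_or_ne c 0 with h0 | h0
      · rw [mem_nilradical]
        refine ⟨3, ?_⟩
        calc D z ^ 3 = D z * (D z * D z) := by ring
          _ = algebraMap F Z c := hc
          _ = 0 := by rw [h0, map_zero]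
      · exfalso
        apply hno z
        refine IsUnit.of_mul_eq_one (D z * D z * algebraMap F Z c⁻¹) ?_
        calc D z * (D z * D z * algebraMap F Z c⁻¹)
            = (D z * (D z * D z)) * algebraMap F Z c⁻¹ := by ring
          _ = algebraMap F Z c * algebraMap F Z c⁻¹ := by rw [hc]
          _ = 1 := by rw [← map_mul, mul_inv_cancel₀ h0, map_one]
    set I : Ideal Z := Ideal.span (Set.range (D : Z → Z)) with hI
    have hmem : ∀ y : Z, D y ∈ I := fun y =>
      Ideal.subset_span ⟨y, rfl⟩
    have hIinv : ∀ x ∈ I, D x ∈ I := by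
      intro x hx
      induction hx using Submodule.span_induction with
      | mem x hx => obtain ⟨y, rfl⟩ := hx; exact hmem (D y)
      | zero => simp
      | add a b _ _ ha hb => rw [map_add]; exact I.add_mem ha hb
      | smul z a haI ha =>
          rw [smul_eq_mul, hD]
          exact I.add_mem (I.mul_mem_left _ haI) (I.mul_mem_left _ ha)
    have hIne : I ≠ ⊥ := by
      obtain ⟨y, hy⟩ : ∃ y, D y ≠ 0 := by
        by_contra h
        push_neg at h
        exact hD0 (LinearMap.ext fun x => h x)
      intro hbot
      exact hy (by simpa [hbot] using hmem y)
    have hItop : I = ⊤ := (hsimple I hIinv).resolve_left hIne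
    have hle : I ≤ nilradical Z := by
      rw [hI, Ideal.span_le]
      rintro x ⟨z, rfl⟩
      exact hnil z
    have h1 : (1 : Z) ∈ nilradical Z := hle (hItop ▸ Submodule.mem_top)
    obtain ⟨n, hn⟩ := h1
    simp only [one_pow] at hn
    exact one_ne_zero hn
  refine ⟨hmain, ?_⟩
  obtain ⟨z, hz⟩ := hmain
  have h1 : D z * ↑hz.unit⁻¹ = 1 := by
    simpa using hz.unit.mul_inv
  refine ⟨ψ z * ↑hz.unit⁻¹, fun a => ?_⟩
  calc ψ a = ψ a * (D z * ↑hz.unit⁻¹) := by rw [h1, mul_one]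
    _ = (ψ a * D z) * ↑hz.unit⁻¹ := by ring
    _ = (D a * ψ z) * ↑hz.unit⁻¹ := by rw [hcomm]
    _ = (ψ z * ↑hz.unit⁻¹) * D a := by ring
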